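/- Let ν ∈ (0,1) and α > 0, and set α_N = α·N·ν^N. Then lim_{N→∞} α_N · ∫₀¹ (1−u)^N u^{α_N − 1} du = 1. -/

import Mathlib

open Filter Topology MeasureTheory

/-- Sub-critical regime: asymptotics of the numerator `∫₀¹ (1-u)^N u^{α_N-1} du ∼ 1/α_N`
with `α_N = α N ν^N`. -/
theorem subcritical_numerator_asymptotics (ν α : ℝ) (hν : ν ∈ Set.Ioo (0:ℝ) 1) (hα : 0 < α) :
    Tendsto (fun N : ℕ =>
        (α * N * ν ^ N) *
          ∫ u in Set.Ioo (0:ℝ) 1, (1 - u) ^ N * u ^ (α * N * ν ^ N - 1))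
      atTop (𝓝 1) := by
  obtain ⟨hν0, hν1⟩ := hν
  have key : ∀ N : ℕ, 1 ≤ N →
      (1 - α * (N:ℝ)^2 * ν^N ≤ (α * N * ν ^ N) *
        ∫ u in Set.Ioo (0:ℝ) 1, (1 - u) ^ N * u ^ (α * N * ν ^ N - 1)) ∧
      ((α * N * ν ^ N) *
        ∫ u in Set.Ioo (0:ℝ) 1, (1 - u) ^ N * u ^ (α * N * ν ^ N - 1) ≤ 1) := by
    intro N hN
    have hNpos : (0:ℝ) < N := by exact_mod_cast hN
    set a := α * (N:ℝ) * ν ^ N with ha_def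
    have ha : 0 < a := by positivity
    -- integrability
    have h1 : IntegrableOn (fun u : ℝ => u ^ (a-1)) (Set.Ioo 0 1) volume := by
      have := intervalIntegral.intervalIntegrable_rpow' (a := 0) (b := 1) (r := a-1) (by linarith)
      rw [intervalIntegrable_iff_integrableOn_Ioo_of_le zero_le_one] at this
      exact this
    have h2 : IntegrableOn (fun u : ℝ => u ^ a) (Set.Ioo 0 1) volume := by
      have := intervalIntegral.intervalIntegrable_rpow' (a := 0) (b := 1) (r := a) (by linarith)
      rw [intervalIntegrable_iff_integrableOn_Ioo_of_le zero_le_one] at this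
      exact this
    have h3 : IntegrableOn (fun u : ℝ => (1-u)^N * u^(a-1)) (Set.Ioo 0 1) volume := by
      apply h1.mono'
      · exact (((continuous_const.sub continuous_id).pow N).aestronglyMeasurable.restrict).mul
          h1.aestronglyMeasurable
      · filter_upwards [self_mem_ae_restrict measurableSet_Ioo] with u hu
        have hu0 : (0:ℝ) < u := hu.1
        have hu1 : u < 1 := hu.2
        have h1u : (0:ℝ) ≤ (1-u)^N := pow_nonneg (by linarith) N
        have h1u' : (1-u)^N ≤ 1 := pow_le_one₀ (by linarith) (by linarith)
        have hr : (0:ℝ) ≤ u ^ (a-1) := Real.rpow_nonneg hu0.le _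
        rw [Real.norm_eq_abs, abs_mul, abs_of_nonneg h1u, abs_of_nonneg hr]
        nlinarith
    -- values of reference integrals
    have I1 : ∫ u in Set.Ioo (0:ℝ) 1, u ^ (a-1) = 1/a := by
      rw [← MeasureTheory.integral_Ioc_eq_integral_Ioo,
        ← intervalIntegral.integral_of_le zero_le_one,
        integral_rpow (Or.inl (by linarith))]
      rw [sub_add_cancel, Real.one_rpow, Real.zero_rpow ha.ne']
      ring
    have I2 : ∫ u in Set.Ioo (0:ℝ) 1, u ^ a = 1/(a+1) := by
      rw [← MeasureTheory.integral_Ioc_eq_integral_Ioo,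
        ← intervalIntegral.integral_of_le zero_le_one,
        integral_rpow (Or.inl (by linarith))]
      rw [Real.one_rpow, Real.zero_rpow (by linarith)]
      ring
    constructor
    · -- lower bound
      have hg : IntegrableOn (fun u : ℝ => u^(a-1) - (N:ℝ) * u^a) (Set.Ioo 0 1) volume :=
        h1.sub (h2.const_mul _)
      have Ig : ∫ u in Set.Ioo (0:ℝ) 1, (u^(a-1) - (N:ℝ) * u^a) = 1/a - (N:ℝ)/(a+1) := by
        rw [integral_sub h1 (h2.const_mul _), integral_const_mul, I1, I2]
        ring
      have hmono : ∫ u in Set.Ioo (0:ℝ) 1, (u^(a-1) - (N:ℝ) * u^a) ≤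
          ∫ u in Set.Ioo (0:ℝ) 1, (1-u)^N * u^(a-1) := by
        apply setIntegral_mono_on hg h3 measurableSet_Ioo
        intro u hu
        have hu0 : (0:ℝ) < u := hu.1
        have hu1 : u < 1 := hu.2
        have hb : 1 - (N:ℝ)*u ≤ (1-u)^N := by
          have := one_add_mul_le_pow (a := -u) (by linarith) N
          calc 1 - (N:ℝ)*u = 1 + (N:ℝ) * (-u) := by ring
            _ ≤ (1 + -u)^N := this
            _ = (1-u)^N := by ring_nf
        have hpow : u^a = u^(a-1) * u := by
          rw [← Real.rpow_add_one hu0.ne', sub_add_cancel]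
        have hr : (0:ℝ) ≤ u ^ (a-1) := Real.rpow_nonneg hu0.le _
        rw [hpow]
        nlinarith
      have e1 : a * (1/a - (N:ℝ)/(a+1)) = 1 - a*(N:ℝ)/(a+1) := by
        field_simp
      have e2 : a*(N:ℝ)/(a+1) ≤ a*(N:ℝ) := div_le_self (by positivity) (by linarith)
      have e3 : a*(N:ℝ) = α * (N:ℝ)^2 * ν^N := by rw [ha_def]; ring
      have := mul_le_mul_of_nonneg_left (Ig ▸ hmono) ha.le
      calc 1 - α * (N:ℝ)^2 * ν^N = 1 - a*(N:ℝ) := by rw [e3]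
        _ ≤ 1 - a*(N:ℝ)/(a+1) := by linarith
        _ = a * (1/a - (N:ℝ)/(a+1)) := e1.symm
        _ ≤ a * ∫ u in Set.Ioo (0:ℝ) 1, (1-u)^N * u^(a-1) := this
    · -- upper bound
      have hmono : ∫ u in Set.Ioo (0:ℝ) 1, (1-u)^N * u^(a-1) ≤
          ∫ u in Set.Ioo (0:ℝ) 1, u^(a-1) := by
        apply setIntegral_mono_on h3 h1 measurableSet_Ioo
        intro u hu
        have hu0 : (0:ℝ) < u := hu.1
        have hu1 : u < 1 := hu.2
        have h1u' : (1-u)^N ≤ 1 := pow_le_one₀ (by linarith) (by linarith)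
        have h1u : (0:ℝ) ≤ (1-u)^N := pow_nonneg (by linarith) N
        have hr : (0:ℝ) ≤ u ^ (a-1) := Real.rpow_nonneg hu0.le _
        nlinarith
      calc a * ∫ u in Set.Ioo (0:ℝ) 1, (1-u)^N * u^(a-1)
          ≤ a * ∫ u in Set.Ioo (0:ℝ) 1, u^(a-1) :=
            mul_le_mul_of_nonneg_left hmono ha.le
        _ = a * (1/a) := by rw [I1]
        _ = 1 := by field_simp
  have hlim : Tendsto (fun N : ℕ => 1 - α * (N:ℝ)^2 * ν^N) atTop (𝓝 1) := by
    have h := (tendsto_pow_const_mul_const_pow_of_lt_one 2 hν0.le hν1).const_mul α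
    have := tendsto_const_nhds (α := ℕ) (x := (1:ℝ)) |>.sub h
    simpa [mul_assoc] using this
  refine tendsto_of_tendsto_of_tendsto_of_le_of_le' hlim tendsto_const_nhds ?_ ?_
  · filter_upwards [eventually_ge_atTop 1] with N hN using (key N hN).1
  · filter_upwards [eventually_ge_atTop 1] with N hN using (key N hN).2
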